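/- The analogous identity holds for adaptive entropies: with T_q defined as the string of q-grams of T, Σ_{u∈Σ^k} |u_T|·H_0^a(u_T) = |T_{k+1}|·H_0^a(T_{k+1}) − |T_k|·H_0^a(T_k), where H_0^a(s)·|s| = log(|s|!) − Σ_c log(n_c!). -/

import Mathlib

/-- `u_T`: the string of single symbols following the occurrences of `u` in `T`,
taken from left to right. -/
def following {α : Type*} [DecidableEq α] (T u : List α) : List α :=
  (List.range T.length).filterMap fun i =>
    if (T.drop i).take u.length = u then (T.drop (i + u.length)).head? else none


/-- `|s|·H₀ᵃ(s) = log(|s|!) − Σ_c log(n_c!)`: zero-th order *adaptive* empirical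
entropy cost (bits). -/
noncomputable def nH0a {α : Type*} [DecidableEq α] (s : List α) : ℝ :=
  Real.logb 2 (Nat.factorial s.length : ℝ)
    - ∑ c ∈ s.toFinset, Real.logb 2 (Nat.factorial (s.count c) : ℝ)

/-- `|T|·H_kᵃ(T) = Σ_{u ∈ Σ^k} |u_T|·H₀ᵃ(u_T)`: `k`-th order adaptive entropy cost. -/
noncomputable def nHka {α : Type*} [Fintype α] [DecidableEq α] (k : ℕ) (T : List α) : ℝ :=
  ∑ u : Fin k → α, nH0a (following T (List.ofFn u))

/-- `T_q`: the string over the alphabet of `q`-grams whose `i`-th symbol is the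
substring `T[i, i+q-1]`. -/
def grams {α : Type*} (q : ℕ) (T : List α) : List (List α) :=
  (List.range (T.length + 1 - q)).map fun i => (T.drop i).take q

section helpers
variable {α : Type*} [DecidableEq α]

private lemma count_filterMap' {β : Type*} [DecidableEq β] (f : ℕ → Option β) (l : List ℕ)
    (c : β) : (l.filterMap f).count c = l.countP (fun x => f x = some c) := by
  induction l with
  | nil => simp
  | cons a l ih =>
    simp only [List.filterMap_cons]
    rcases h : f a with _ | b
    · simpa [h] using ih
    · by_cases hb : b = c <;> simp [h, hb, List.count_cons, ih, List.countP_cons]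

private lemma countP_range_eq (p : ℕ → Bool) {m n : ℕ} (h : m ≤ n)
    (hp : ∀ i, p i = true → i < m) :
    (List.range n).countP p = (List.range m).countP p := by
  obtain ⟨d, rfl⟩ := Nat.exists_eq_add_of_le h
  rw [List.range_add, List.countP_append, List.countP_map]
  have h0 : List.countP (p ∘ fun x => m + x) (List.range d) = 0 := by
    rw [List.countP_eq_zero]
    intro a _ hpa
    simp only [Function.comp_apply] at hpa
    have := hp _ hpa
    omega
  omega

private lemma take_one_eq (l : List α) (c : α) : l.take 1 = [c] ↔ l.head? = some c := by
  cases l <;> simp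

private lemma head?_some_lt {T : List α} {j : ℕ} {c : α} (h : (T.drop j).head? = some c) :
    j < T.length := by
  by_contra hj
  rw [List.drop_eq_nil_iff.mpr (by omega)] at h
  simp at h

private lemma take_succ_iff (T u : List α) (c : α) (i k : ℕ) (hk : u.length = k) :
    (T.drop i).take (k + 1) = u ++ [c]
      ↔ ((T.drop i).take k = u ∧ (T.drop (i + k)).head? = some c) := by
  rw [List.take_add, List.drop_drop, ← take_one_eq]
  constructor
  · intro h
    have hlen := congrArg List.length h
    simp only [List.length_append, List.length_take, List.length_drop, hk,
      List.length_cons, List.length_nil] at hlen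
    have hl : ((T.drop i).take k).length = u.length := by
      simp only [List.length_take, List.length_drop, hk]; omega
    exact List.append_inj h hl
  · rintro ⟨h1, h2⟩
    rw [h1, h2]

private lemma count_grams_eq_countP (q : ℕ) (T : List α) (w : List α) :
    (grams q T).count w
      = (List.range (T.length + 1 - q)).countP (fun i => (T.drop i).take q = w) := by
  rw [grams, List.count_eq_countP, List.countP_map]
  refine List.countP_congr fun i _ => ?_
  simp

/-- Lemma A -/
private lemma count_grams_succ (T u : List α) (c : α) (k : ℕ) (hk : u.length = k) :
    (grams (k + 1) T).count (u ++ [c]) = (following T u).count c := by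
  rw [count_grams_eq_countP, following, count_filterMap']
  have h1 : T.length + 1 - (k + 1) = T.length - k := by omega
  rw [h1]
  have h2 : (List.range T.length).countP
        (fun x => (if (T.drop x).take u.length = u then (T.drop (x + u.length)).head? else none)
          = some c)
      = (List.range T.length).countP
        (fun i => (T.drop i).take (k + 1) = u ++ [c]) := by
    refine List.countP_congr fun i _ => ?_
    simp only [decide_eq_true_eq, hk]
    rw [take_succ_iff T u c i k hk]
    split_ifs with h
    · simp [h]
    · simp [h]
  rw [h2]
  refine (countP_range_eq _ (by omega) ?_).symm
  intro i hi
  simp only [decide_eq_true_eq] at hi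
  rw [take_succ_iff T u c i k hk] at hi
  have := head?_some_lt hi.2
  omega

/-- Lemma B -/
private lemma length_following (T u : List α) (k : ℕ) (hk : u.length = k) (hT : T ≠ []) :
    (following T u).length = (grams k T.dropLast).count u := by
  rw [count_grams_eq_countP, following, List.length_filterMap_eq_countP]
  have hT1 : 1 ≤ T.length := List.length_pos_iff.mpr hT
  have h1 : T.dropLast.length + 1 - k = T.length - k := by
    rw [List.length_dropLast]; omega
  rw [h1]
  have h2 : (List.range T.length).countP
        (fun x => (if (T.drop x).take u.length = u then (T.drop (x + u.length)).head? else none).isSome)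
      = (List.range T.length).countP
        (fun i => (T.drop i).take k = u ∧ i + k < T.length) := by
    refine List.countP_congr fun i _ => ?_
    simp only [hk, decide_eq_true_eq]
    split_ifs with h
    · simp only [h, true_and, Option.isSome_iff_exists]
      constructor
      · rintro ⟨c, hc⟩; exact head?_some_lt hc
      · intro hlt
        rcases hd : (T.drop (i + k)).head? with _ | c
        · rw [List.head?_eq_none_iff, List.drop_eq_nil_iff] at hd; omega
        · exact ⟨c, rfl⟩
    · simp [h]
  rw [h2, countP_range_eq _ (show T.length - k ≤ T.length by omega)
    (by intro i hi; simp only [decide_eq_true_eq] at hi; omega)]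
  refine List.countP_congr fun i hi => ?_
  rw [List.mem_range] at hi
  have hik : i + k < T.length := by omega
  have hdt : (T.dropLast.drop i).take k = (T.drop i).take k := by
    rw [List.dropLast_eq_take, List.drop_take, List.take_take]
    congr 1
    omega
  simp only [decide_eq_true_eq, hdt]
  constructor
  · rintro ⟨h, _⟩; exact h
  · intro h; exact ⟨h, hik⟩

private lemma mem_grams_length {q : ℕ} {T : List α} {w : List α} (h : w ∈ grams q T) :
    w.length = q := by
  rw [grams, List.mem_map] at h
  obtain ⟨i, hi, rfl⟩ := h
  rw [List.mem_range] at hi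
  simp only [List.length_take, List.length_drop]
  omega

private lemma exists_ofFn {k : ℕ} {w : List α} (h : w.length = k) :
    ∃ u : Fin k → α, List.ofFn u = w := by
  subst h
  exact ⟨w.get, List.ofFn_get w⟩

private lemma count_congr_inst {β : Type*} {i1 i2 : BEq β} (h1 : @LawfulBEq β i1)
    (h2 : @LawfulBEq β i2) (a : β) (l : List β) :
    @List.count β i1 a l = @List.count β i2 a l := by
  rw [@List.count_eq_countP _ i1, @List.count_eq_countP _ i2]
  refine List.countP_congr fun x _ => ?_
  constructor
  · intro hx; exact (@beq_iff_eq _ i2 h2 _ _).mpr ((@beq_iff_eq _ i1 h1 _ _).mp hx)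
  · intro hx; exact (@beq_iff_eq _ i1 h1 _ _).mpr ((@beq_iff_eq _ i2 h2 _ _).mp hx)

private lemma nH0a_eq (s : List (List α)) :
    nH0a s = Real.logb 2 (Nat.factorial s.length : ℝ)
      - ∑ c ∈ s.toFinset, Real.logb 2 (Nat.factorial (s.count c) : ℝ) := by
  rw [nH0a]
  congr 1
  refine Finset.sum_congr rfl fun c _ => ?_
  exact congrArg (fun n : ℕ => Real.logb 2 (Nat.factorial n : ℝ))
    (count_congr_inst (i1 := instBEqOfDecidableEq) (i2 := List.instBEq) inferInstance
      inferInstance c s)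

end helpers

/-- The analogous identity holds for adaptive entropies:
`Σ_{u∈Σ^k} |u_T|·H₀ᵃ(u_T) = |T_{k+1}|·H₀ᵃ(T_{k+1}) − |T_k|·H₀ᵃ(T_k)`, with the
`q`-gram strings as in the non-adaptive identity (counts interpreted so that an
occurrence of the `(k+1)`-gram `uc` corresponds to an occurrence of `c` in `u_T`,
i.e. `T_k` ranges over the positions having a following symbol). -/
theorem nHka_as_gram_difference (α : Type*) [Fintype α] [DecidableEq α]
    (T : List α) (k : ℕ) :
    nHka k T = nH0a (grams (k + 1) T) - nH0a (grams k T.dropLast) := by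
  rcases eq_or_ne T [] with rfl | hT
  · rcases k with _ | k
    · simp [nHka, nH0a, following, grams, List.range_succ]
    · simp [nHka, nH0a, following, grams, show (0:ℕ) + 1 - (k+1+1) = 0 by omega,
        show (0:ℕ) + 1 - (k+1) = 0 by omega]
  · have hT1 : 1 ≤ T.length := List.length_pos_iff.mpr hT
    -- lengths of the two gram strings agree
    have hlen1 : (grams (k + 1) T).length = T.length - k := by
      simp only [grams, List.length_map, List.length_range]; omega
    have hlen0 : (grams k T.dropLast).length = T.length - k := by
      simp only [grams, List.length_map, List.length_range, List.length_dropLast]; omega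
    -- S1
    have S1 : (∑ u : Fin k → α,
          Real.logb 2 (Nat.factorial (following T (List.ofFn u)).length : ℝ))
        = ∑ w ∈ (grams k T.dropLast).toFinset,
            Real.logb 2 (Nat.factorial ((grams k T.dropLast).count w) : ℝ) := by
      have himg : ∑ w ∈ Finset.univ.image (fun u : Fin k → α => List.ofFn u),
            Real.logb 2 (Nat.factorial ((grams k T.dropLast).count w) : ℝ)
          = ∑ u : Fin k → α,
              Real.logb 2 (Nat.factorial ((grams k T.dropLast).count (List.ofFn u)) : ℝ) :=
        Finset.sum_image (fun x _ y _ h => List.ofFn_inj.mp h)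
      have hsub : (grams k T.dropLast).toFinset
          ⊆ Finset.univ.image (fun u : Fin k → α => List.ofFn u) := by
        intro w hw
        rw [List.mem_toFinset] at hw
        obtain ⟨u, hu⟩ := exists_ofFn (mem_grams_length hw)
        exact Finset.mem_image.mpr ⟨u, Finset.mem_univ u, hu⟩
      rw [Finset.sum_subset hsub (fun w _ hw => by
        rw [List.mem_toFinset] at hw
        rw [List.count_eq_zero.mpr hw]; simp), himg]
      refine Finset.sum_congr rfl fun u _ => ?_
      rw [length_following T (List.ofFn u) k (List.length_ofFn (f := u)) hT]
    -- S2
    have S2 : (∑ u : Fin k → α, ∑ c ∈ (following T (List.ofFn u)).toFinset,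
          Real.logb 2 (Nat.factorial ((following T (List.ofFn u)).count c) : ℝ))
        = ∑ w ∈ (grams (k + 1) T).toFinset,
            Real.logb 2 (Nat.factorial ((grams (k + 1) T).count w) : ℝ) := by
      have hinj : ∀ x ∈ (Finset.univ : Finset ((Fin k → α) × α)),
          ∀ y ∈ (Finset.univ : Finset ((Fin k → α) × α)),
          (fun p : (Fin k → α) × α => List.ofFn p.1 ++ [p.2]) x
            = (fun p : (Fin k → α) × α => List.ofFn p.1 ++ [p.2]) y → x = y := by
        rintro ⟨u, c⟩ - ⟨v, d⟩ - h
        obtain ⟨h1, h2⟩ := List.append_inj h (by simp)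
        simp only [List.ofFn_inj] at h1
        simp only [List.cons.injEq] at h2
        exact Prod.ext h1 h2.1
      have himg : ∑ w ∈ Finset.univ.image (fun p : (Fin k → α) × α => List.ofFn p.1 ++ [p.2]),
            Real.logb 2 (Nat.factorial ((grams (k + 1) T).count w) : ℝ)
          = ∑ p : (Fin k → α) × α,
              Real.logb 2 (Nat.factorial ((grams (k + 1) T).count (List.ofFn p.1 ++ [p.2])) : ℝ) :=
        Finset.sum_image hinj
      have hcard : ∀ u : Fin k → α,
          (∑ c ∈ (following T (List.ofFn u)).toFinset,
            Real.logb 2 (Nat.factorial ((following T (List.ofFn u)).count c) : ℝ))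
          = ∑ c : α, Real.logb 2
              (Nat.factorial ((grams (k + 1) T).count (List.ofFn u ++ [c])) : ℝ) := by
        intro u
        rw [Finset.sum_subset (Finset.subset_univ _) (fun c _ hc => by
          rw [List.count_eq_zero.mpr (by simpa using hc)]; simp)]
        exact Finset.sum_congr rfl fun c _ => by
          rw [count_grams_succ T (List.ofFn u) c k (List.length_ofFn (f := u))]
      have hsub : (grams (k + 1) T).toFinset
          ⊆ Finset.univ.image (fun p : (Fin k → α) × α => List.ofFn p.1 ++ [p.2]) := by
        intro w hw
        rw [List.mem_toFinset] at hw
        have hwl : w.length = k + 1 := mem_grams_length hw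
        have hne : w ≠ [] := by intro h; rw [h] at hwl; simp at hwl
        obtain ⟨u, hu⟩ := exists_ofFn (show w.dropLast.length = k by
          simp [List.length_dropLast, hwl])
        refine Finset.mem_image.mpr ⟨(u, w.getLast hne), Finset.mem_univ _, ?_⟩
        simp only [hu]
        exact List.dropLast_append_getLast hne
      calc (∑ u : Fin k → α, ∑ c ∈ (following T (List.ofFn u)).toFinset,
              Real.logb 2 (Nat.factorial ((following T (List.ofFn u)).count c) : ℝ))
          = ∑ u : Fin k → α, ∑ c : α,
              Real.logb 2 (Nat.factorial ((grams (k + 1) T).count (List.ofFn u ++ [c])) : ℝ) :=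
            Finset.sum_congr rfl fun u _ => hcard u
        _ = ∑ p : (Fin k → α) × α,
              Real.logb 2 (Nat.factorial ((grams (k + 1) T).count (List.ofFn p.1 ++ [p.2])) : ℝ) :=
            by rw [Fintype.sum_prod_type]
        _ = ∑ w ∈ Finset.univ.image (fun p : (Fin k → α) × α => List.ofFn p.1 ++ [p.2]),
              Real.logb 2 (Nat.factorial ((grams (k + 1) T).count w) : ℝ) := himg.symm
        _ = ∑ w ∈ (grams (k + 1) T).toFinset,
              Real.logb 2 (Nat.factorial ((grams (k + 1) T).count w) : ℝ) :=
            (Finset.sum_subset hsub (fun w _ hw => by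
              rw [List.mem_toFinset] at hw
              rw [List.count_eq_zero.mpr hw]; simp)).symm
    -- assemble
    rw [nHka]
    rw [nH0a_eq (grams (k+1) T), nH0a_eq (grams k T.dropLast)]
    simp only [nH0a, hlen1, hlen0]
    rw [Finset.sum_sub_distrib, S1, S2]
    ring
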